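/- Let Γ be the presented group with generators g, h, f and relations h g h⁻¹ = g⁻¹, h f h⁻¹ = f⁻¹, and g f = f g. Let k, l, m be integers with k ≠ 0 or m ≠ 0. Then the centralizer in Γ of the element g^k · h^{2l} · f^m equals the subgroup of Γ generated by the set {g, h², f}. -/

import Mathlib

/-- The relator set of the presented group
`Γ = ⟨g, h, f | h g h⁻¹ = g⁻¹, h f h⁻¹ = f⁻¹, g f = f g⟩`,
the fundamental group of the spherical tangent bundle of the Klein bottle.
Generator `0` is `g`, generator `1` is `h`, generator `2` is `f`. -/
def kleinSTRels : Set (FreeGroup (Fin 3)) :=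
  { FreeGroup.of 1 * FreeGroup.of 0 * (FreeGroup.of 1)⁻¹ * FreeGroup.of 0,
    FreeGroup.of 1 * FreeGroup.of 2 * (FreeGroup.of 1)⁻¹ * FreeGroup.of 2,
    FreeGroup.of 0 * FreeGroup.of 2 * (FreeGroup.of 0)⁻¹ * (FreeGroup.of 2)⁻¹ }

/-- The presented group `⟨g, h, f | h g h⁻¹ = g⁻¹, h f h⁻¹ = f⁻¹, g f = f g⟩`. -/
abbrev KleinST : Type := PresentedGroup kleinSTRels

def KleinST.g : KleinST := PresentedGroup.of 0
def KleinST.h : KleinST := PresentedGroup.of 1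
def KleinST.f : KleinST := PresentedGroup.of 2

namespace KleinST

open Subgroup

lemma rel_eq_one {r : FreeGroup (Fin 3)} (hr : r ∈ kleinSTRels) :
    PresentedGroup.mk kleinSTRels r = 1 :=
  (QuotientGroup.eq_one_iff r).mpr (Subgroup.subset_normalClosure hr)

lemma conj_h_g : h * g * h⁻¹ = g⁻¹ := by
  have h1 : h * g * h⁻¹ * g = 1 := by
    simpa only [map_mul, map_inv, h, g, f, PresentedGroup.of] using rel_eq_one (Set.mem_insert _ _)
  exact mul_eq_one_iff_eq_inv.mp h1

lemma conj_h_f : h * f * h⁻¹ = f⁻¹ := by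
  have h1 : h * f * h⁻¹ * f = 1 := by
    simpa only [map_mul, map_inv, h, g, f, PresentedGroup.of] using
      rel_eq_one (Set.mem_insert_of_mem _ (Set.mem_insert _ _))
  exact mul_eq_one_iff_eq_inv.mp h1

lemma comm_gf : Commute g f := by
  have h1 : g * f * g⁻¹ * f⁻¹ = 1 := by
    simpa only [map_mul, map_inv, h, g, f, PresentedGroup.of] using
      rel_eq_one (Set.mem_insert_of_mem _ (Set.mem_insert_of_mem _ rfl))
  have h2 := mul_eq_one_iff_eq_inv.mp h1
  rw [inv_inv] at h2
  unfold Commute SemiconjBy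
  calc g * f = (g * f * g⁻¹) * g := by group
    _ = f * g := by rw [h2]

lemma conj_h_ginv : h * g⁻¹ * h⁻¹ = g := by
  have e : h * g⁻¹ * h⁻¹ = (h * g * h⁻¹)⁻¹ := by group
  rw [e, conj_h_g, inv_inv]

lemma conj_h_finv : h * f⁻¹ * h⁻¹ = f := by
  have e : h * f⁻¹ * h⁻¹ = (h * f * h⁻¹)⁻¹ := by group
  rw [e, conj_h_f, inv_inv]

lemma comm_h2g : Commute (h ^ 2) g := by
  unfold Commute SemiconjBy
  have : h ^ 2 * g * (h ^ 2)⁻¹ = g := by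
    rw [show h ^ 2 * g * (h ^ 2)⁻¹ = h * (h * g * h⁻¹) * h⁻¹ from by rw [pow_two]; group,
      conj_h_g, conj_h_ginv]
  exact mul_inv_eq_iff_eq_mul.mp this

lemma comm_h2f : Commute (h ^ 2) f := by
  unfold Commute SemiconjBy
  have : h ^ 2 * f * (h ^ 2)⁻¹ = f := by
    rw [show h ^ 2 * f * (h ^ 2)⁻¹ = h * (h * f * h⁻¹) * h⁻¹ from by rw [pow_two]; group,
      conj_h_f, conj_h_finv]
  exact mul_inv_eq_iff_eq_mul.mp this

/-- The subgroup generated by `g`, `h²`, `f`. -/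
def N : Subgroup KleinST := Subgroup.closure {g, h ^ 2, f}

lemma g_mem : g ∈ N := subset_closure (Set.mem_insert _ _)
lemma h2_mem : h ^ 2 ∈ N := subset_closure (Set.mem_insert_of_mem _ (Set.mem_insert _ _))
lemma f_mem : f ∈ N :=
  subset_closure (Set.mem_insert_of_mem _ (Set.mem_insert_of_mem _ rfl))

lemma hpow (l : ℤ) : h ^ (2 * l) = (h ^ 2) ^ l := by
  rw [zpow_mul]; norm_cast

lemma N_le_centralizer (k l m : ℤ) :
    N ≤ centralizer {g ^ k * h ^ (2 * l) * f ^ m} := by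
  rw [N, closure_le]
  have key : ∀ x ∈ ({g, h ^ 2, f} : Set KleinST),
      Commute x (g ^ k * h ^ (2 * l) * f ^ m) := by
    intro x hx
    rw [hpow]
    rcases hx with rfl | rfl | rfl
    · exact (((Commute.refl g).zpow_right k).mul_right
        (comm_h2g.symm.zpow_right l)).mul_right (comm_gf.zpow_right m)
    · exact ((comm_h2g.zpow_right k).mul_right
        ((Commute.refl (h ^ 2)).zpow_right l)).mul_right (comm_h2f.zpow_right m)
    · exact ((comm_gf.symm.zpow_right k).mul_right
        (comm_h2f.symm.zpow_right l)).mul_right ((Commute.refl f).zpow_right m)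
  intro x hx
  exact mem_centralizer_iff.mpr (by rintro y ⟨rfl⟩; exact ((key x hx)).symm.eq)

lemma conj_h_mem {n : KleinST} (hn : n ∈ N) : h * n * h⁻¹ ∈ N := by
  induction hn using closure_induction with
  | mem x hx =>
    rcases hx with rfl | rfl | rfl
    · rw [conj_h_g]; exact inv_mem g_mem
    · rw [show h * h ^ 2 * h⁻¹ = h ^ 2 from by rw [pow_two]; group]; exact h2_mem
    · rw [conj_h_f]; exact inv_mem f_mem
  | one => simpa using one_mem N
  | mul x y hx hy ihx ihy =>
    rw [show h * (x * y) * h⁻¹ = (h * x * h⁻¹) * (h * y * h⁻¹) from by group]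
    exact mul_mem ihx ihy
  | inv x hx ihx =>
    rw [show h * x⁻¹ * h⁻¹ = (h * x * h⁻¹)⁻¹ from by group]
    exact inv_mem ihx

lemma conj_hinv_mem {n : KleinST} (hn : n ∈ N) : h⁻¹ * n * h ∈ N := by
  rw [show h⁻¹ * n * h = (h ^ 2)⁻¹ * (h * n * h⁻¹) * h ^ 2 from by rw [pow_two]; group]
  exact mul_mem (mul_mem (inv_mem h2_mem) (conj_h_mem hn)) h2_mem

lemma cover (x : KleinST) : x ∈ N ∨ h⁻¹ * x ∈ N := by
  have hx : x ∈ Subgroup.closure (Set.range (PresentedGroup.of : Fin 3 → KleinST)) := by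
    rw [PresentedGroup.closure_range_of]; trivial
  induction hx using closure_induction with
  | mem x hx =>
    obtain ⟨i, rfl⟩ := hx
    fin_cases i
    · exact Or.inl g_mem
    · right; show h⁻¹ * h ∈ N; rw [inv_mul_cancel]; exact one_mem N
    · exact Or.inl f_mem
  | one => exact Or.inl (one_mem N)
  | mul x y hx hy ihx ihy =>
    rcases ihx with hx' | hx' <;> rcases ihy with hy' | hy'
    · exact Or.inl (mul_mem hx' hy')
    · exact Or.inr (by
        rw [show h⁻¹ * (x * y) = (h⁻¹ * x * h) * (h⁻¹ * y) from by group]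
        exact mul_mem (conj_hinv_mem hx') hy')
    · exact Or.inr (by
        rw [show h⁻¹ * (x * y) = (h⁻¹ * x) * y from by group]
        exact mul_mem hx' hy')
    · exact Or.inl (by
        rw [show x * y = h ^ 2 * (h⁻¹ * (h⁻¹ * x) * h) * (h⁻¹ * y) from by rw [pow_two]; group]
        exact mul_mem (mul_mem h2_mem (conj_hinv_mem hx')) hy')
  | inv x hx ihx =>
    rcases ihx with hx' | hx'
    · exact Or.inl (inv_mem hx')
    · exact Or.inr (by
        rw [show h⁻¹ * x⁻¹ = (h⁻¹ * (h⁻¹ * x)⁻¹ * h) * (h ^ 2)⁻¹ from by rw [pow_two]; group]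
        exact mul_mem (conj_hinv_mem (inv_mem hx')) (inv_mem h2_mem))

/-! ### A concrete model detecting `g` and `f` -/

abbrev GM := Multiplicative (ℤ × ℤ)

def negAct : Multiplicative ℤ →* MulAut GM := zpowersHom _ (MulEquiv.inv GM)

abbrev Target := GM ⋊[negAct] Multiplicative ℤ

def Ffun : Fin 3 → Target :=
  ![SemidirectProduct.inl (Multiplicative.ofAdd (1, 0)),
    SemidirectProduct.inr (Multiplicative.ofAdd 1),
    SemidirectProduct.inl (Multiplicative.ofAdd (0, 1))]

lemma rels_one : ∀ r ∈ kleinSTRels, FreeGroup.lift Ffun r = 1 := by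
  intro r hr
  rcases hr with rfl | rfl | rfl <;>
  · ext <;>
    simp [Ffun, SemidirectProduct.mul_left, SemidirectProduct.mul_right,
      SemidirectProduct.inv_left, SemidirectProduct.inv_right, negAct] <;> rfl

def ψ : KleinST →* Target := PresentedGroup.toGroup rels_one

lemma psi_g : ψ g = SemidirectProduct.inl (Multiplicative.ofAdd (1, 0)) :=
  PresentedGroup.toGroup.of rels_one

lemma psi_f : ψ f = SemidirectProduct.inl (Multiplicative.ofAdd (0, 1)) :=
  PresentedGroup.toGroup.of rels_one

lemma detect {k m : ℤ} (hh : g ^ (2 * k) * f ^ (2 * m) = 1) : k = 0 ∧ m = 0 := by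
  have h1 := congrArg ψ hh
  rw [map_mul, map_zpow, map_zpow, map_one, psi_g, psi_f,
    ← map_zpow (SemidirectProduct.inl (φ := negAct)),
    ← map_zpow (SemidirectProduct.inl (φ := negAct)),
    ← map_mul] at h1
  have h2 : (Multiplicative.ofAdd ((1:ℤ),(0:ℤ))) ^ (2*k) *
      (Multiplicative.ofAdd ((0:ℤ),(1:ℤ))) ^ (2*m) = 1 :=
    SemidirectProduct.inl_injective
      (h1.trans (map_one (SemidirectProduct.inl (φ := negAct))).symm)
  have h3 := congrArg Multiplicative.toAdd h2
  simp [Prod.ext_iff] at h3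
  omega

end KleinST

/-- In `Γ = ⟨g, h, f | h g h⁻¹ = g⁻¹, h f h⁻¹ = f⁻¹, g f = f g⟩`, for integers `k, l, m`
with `k ≠ 0` or `m ≠ 0`, the centralizer of `g ^ k * h ^ (2l) * f ^ m` is the subgroup
generated by `{g, h ^ 2, f}`. -/
theorem kleinST_centralizer_orientation_preserving (k l m : ℤ) (hkm : k ≠ 0 ∨ m ≠ 0) :
    Subgroup.centralizer {KleinST.g ^ k * KleinST.h ^ (2 * l) * KleinST.f ^ m} =
      Subgroup.closure {KleinST.g, KleinST.h ^ 2, KleinST.f} := by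
  open KleinST in
  apply le_antisymm
  · intro x hx
    rcases cover x with hN | hN
    · exact hN
    · exfalso
      set w := g ^ k * h ^ (2 * l) * f ^ m with hw
      have hxw : w * x = x * w := Subgroup.mem_centralizer_iff.mp hx w rfl
      have hnw : w * (h⁻¹ * x) = (h⁻¹ * x) * w :=
        Subgroup.mem_centralizer_iff.mp (N_le_centralizer k l m hN) w rfl
      have hhw : h * w = w * h := by
        have key : (w * h) * (h⁻¹ * x) = (h * w) * (h⁻¹ * x) := by
          calc (w * h) * (h⁻¹ * x) = w * x := by group
            _ = x * w := hxw
            _ = h * ((h⁻¹ * x) * w) := by group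
            _ = h * (w * (h⁻¹ * x)) := by rw [hnw]
            _ = (h * w) * (h⁻¹ * x) := by group
        exact (mul_right_cancel key).symm
      have hconj : h * w * h⁻¹ = w := by rw [hhw]; group
      have e3 : h * w * h⁻¹ = g⁻¹ ^ k * h ^ (2 * l) * f⁻¹ ^ m := by
        rw [hw]
        have comm_hh : h * h ^ (2 * l) * h⁻¹ = h ^ (2 * l) := by
          rw [((Commute.refl h).zpow_right (2 * l)).eq, mul_inv_cancel_right]
        have expand : h * (g ^ k * h ^ (2 * l) * f ^ m) * h⁻¹
            = (h * g * h⁻¹) ^ k * (h * h ^ (2 * l) * h⁻¹) * (h * f * h⁻¹) ^ m := by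
          rw [conj_zpow, conj_zpow]
          generalize g ^ k = A
          generalize h ^ (2 * l) = B
          generalize f ^ m = C
          group
        rw [expand, conj_h_g, conj_h_f, comm_hh]
      have E : g ^ k * h ^ (2 * l) * f ^ m = g⁻¹ ^ k * h ^ (2 * l) * f⁻¹ ^ m := by
        rw [← hw, ← hconj, e3]
      have E2 : g ^ (2 * k) * h ^ (2 * l) * f ^ (2 * m) = h ^ (2 * l) := by
        have := congrArg (fun z => g ^ k * z * f ^ m) E
        calc g ^ (2 * k) * h ^ (2 * l) * f ^ (2 * m)
            = g ^ k * (g ^ k * h ^ (2 * l) * f ^ m) * f ^ m := by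
              rw [show (2 : ℤ) * k = k + k from by ring, show (2 : ℤ) * m = m + m from by ring,
                zpow_add, zpow_add]
              generalize g ^ k = A
              generalize h ^ (2 * l) = B
              generalize f ^ m = C
              group
          _ = g ^ k * (g⁻¹ ^ k * h ^ (2 * l) * f⁻¹ ^ m) * f ^ m := this
          _ = h ^ (2 * l) := by
              rw [inv_zpow, inv_zpow]
              generalize g ^ k = A
              generalize h ^ (2 * l) = B
              generalize f ^ m = C
              group
      have E3 : g ^ (2 * k) * f ^ (2 * m) = 1 := by
        have comm1 : g ^ (2 * k) * h ^ (2 * l) = h ^ (2 * l) * g ^ (2 * k) := by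
          rw [hpow l]
          exact (comm_h2g.symm.zpow_zpow (2 * k) l).eq
        rw [show g ^ (2 * k) * h ^ (2 * l) * f ^ (2 * m)
            = (g ^ (2 * k) * h ^ (2 * l)) * f ^ (2 * m) from by group, comm1] at E2
        have : h ^ (2 * l) * (g ^ (2 * k) * f ^ (2 * m)) = h ^ (2 * l) * 1 := by
          rw [mul_one, ← mul_assoc]; exact E2
        exact mul_left_cancel this
      obtain ⟨hk0, hm0⟩ := detect E3
      rcases hkm with hk | hm
      · exact hk hk0
      · exact hm hm0
  · exact KleinST.N_le_centralizer k l m
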